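/- Let g : ℝ^N → ℝ be differentiable and satisfy g(y) ≥ g(x) + ⟨∇g(x), y - x⟩ - (U/2)‖y - x‖² for all x, y differing in at most one coordinate, with U > 0. Let γ_S minimize a convex objective -g over nonnegative vectors supported on S, and define F(S) = g(γ_S) - g(0). Then for any coordinate u ∉ S, F(S ∪ {u}) - F(S) ≥ (1/(2U))·(max(∂_u g(γ_S), 0))², where ∂_u g denotes the u-th partial derivative. -/

import Mathlib

/-- Marginal-gain lower bound (Lemma A2, abstract form): if `g` is differentiable
and satisfies the smoothness inequality with parameter `U` on pairs differing in
at most one coordinate, and `γS`, `γSu` maximize `g` over nonnegative vectors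
supported on `S` and `S ∪ {u}` respectively, then
`F(S∪{u}) - F(S) ≥ (1/(2U))·(max(∂_u g(γS), 0))²`. -/
theorem stmt_9 (N : ℕ) (g : EuclideanSpace ℝ (Fin N) → ℝ) (hg : Differentiable ℝ g)
    (U : ℝ) (hU : 0 < U)
    (hsmooth : ∀ x y : EuclideanSpace ℝ (Fin N), (∃ u : Fin N, ∀ v, v ≠ u → x v = y v) →
      g y ≥ g x + inner ℝ (gradient g x) (y - x) - U / 2 * ‖y - x‖ ^ 2)
    (S : Finset (Fin N)) (u : Fin N) (hu : u ∉ S)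
    (γS γSu : EuclideanSpace ℝ (Fin N))
    (hγS : ((∀ v, 0 ≤ γS v) ∧ ∀ v ∉ S, γS v = 0) ∧
      ∀ x : EuclideanSpace ℝ (Fin N), ((∀ v, 0 ≤ x v) ∧ ∀ v ∉ S, x v = 0) → g x ≤ g γS)
    (hγSu : ((∀ v, 0 ≤ γSu v) ∧ ∀ v ∉ insert u S, γSu v = 0) ∧
      ∀ x : EuclideanSpace ℝ (Fin N), ((∀ v, 0 ≤ x v) ∧ ∀ v ∉ insert u S, x v = 0) →
        g x ≤ g γSu) :
    (g γSu - g 0) - (g γS - g 0) ≥ 1 / (2 * U) * (max (gradient g γS u) 0) ^ 2 := by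
  set c : ℝ := max (gradient g γS u) 0 with hc
  have hc0 : 0 ≤ c := le_max_right _ _
  set η : ℝ := c / U with hη
  have hη0 : 0 ≤ η := div_nonneg hc0 hU.le
  set y : EuclideanSpace ℝ (Fin N) := γS + EuclideanSpace.single u η with hy
  have hdiff : y - γS = EuclideanSpace.single u η := by simp [hy]
  have hyv : ∀ v, y v = γS v + (if v = u then η else 0) := by
    intro v
    simp [hy, EuclideanSpace.single_apply]
  have hsm := hsmooth γS y ⟨u, fun v hv => by simp [hyv v, hv]⟩
  rw [hdiff] at hsm
  have hinner : (inner ℝ (gradient g γS) (EuclideanSpace.single u η) : ℝ)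
      = gradient g γS u * η := by
    rw [real_inner_comm]
    rw [EuclideanSpace.inner_single_left]
    simp [mul_comm]
  have hnorm : ‖(EuclideanSpace.single u η : EuclideanSpace ℝ (Fin N))‖ ^ 2 = η ^ 2 := by
    rw [EuclideanSpace.norm_single, Real.norm_eq_abs, sq_abs]
  rw [hinner, hnorm] at hsm
  have hfeas : ((∀ v, 0 ≤ y v) ∧ ∀ v ∉ insert u S, y v = 0) := by
    constructor
    · intro v
      rw [hyv v]
      have := hγS.1.1 v
      split <;> linarith
    · intro v hv
      have hv1 : v ≠ u := fun h => hv (h ▸ Finset.mem_insert_self u S)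
      have hv2 : v ∉ S := fun h => hv (Finset.mem_insert_of_mem h)
      rw [hyv v, hγS.1.2 v hv2, if_neg hv1, add_zero]
  have hle : g y ≤ g γSu := hγSu.2 y hfeas
  have hkey : gradient g γS u * η - U / 2 * η ^ 2 ≥ 1 / (2 * U) * c ^ 2 := by
    rcases le_or_gt 0 (gradient g γS u) with h | h
    · have hcg : c = gradient g γS u := max_eq_left h
      rw [hcg] at hη ⊢
      have heq : gradient g γS u * η - U / 2 * η ^ 2
          = 1 / (2 * U) * (gradient g γS u) ^ 2 := by
        rw [hη]; field_simp; ring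
      rw [heq]
    · have hcg : c = 0 := max_eq_right h.le
      rw [hcg] at hη ⊢
      simp [hη]
  linarith
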